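/- The set of extreme points of the Minkowski sum C_n + ◇^n = [−1,1]^n + conv{±e_1,…,±e_n} is exactly the set of points x ∈ ℝ^n for which there exists an index j with |x_j| = 2 and |x_i| = 1 for all i ≠ j (equivalently, the orbit of the point 2e_1 + e_2 + ⋯ + e_n under all signed permutations of the coordinates). -/

import Mathlib

open scoped BigOperators Pointwise

/-- The `i`-th standard basis vector of `ℝ^n`. -/
noncomputable def stdVec (n : ℕ) (i : Fin n) : Fin n → ℝ := Pi.single i 1

/-- The regular cube `C_n = [-1,1]^n`. -/
def regCube (n : ℕ) : Set (Fin n → ℝ) := {x | ∀ i, |x i| ≤ 1}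

/-- The cross-polytope `◇^n = conv{±e_1, …, ±e_n}`. -/
noncomputable def crossPoly (n : ℕ) : Set (Fin n → ℝ) :=
  convexHull ℝ {x | ∃ i : Fin n, x = stdVec n i ∨ x = -stdVec n i}

/-! ### Auxiliary definitions -/

/-- sign function valued in `{1, -1}`. -/
noncomputable def sgn (t : ℝ) : ℝ := if 0 ≤ t then 1 else -1

lemma sgn_mul (t : ℝ) : sgn t * t = |t| := by
  unfold sgn; split_ifs with h
  · rw [one_mul, abs_of_nonneg h]
  · rw [abs_of_neg (not_le.mp h)]; ring

lemma sgn_sq (t : ℝ) : sgn t * sgn t = 1 := by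
  unfold sgn; split_ifs <;> norm_num

lemma abs_sgn (t : ℝ) : |sgn t| = 1 := by
  unfold sgn; split_ifs <;> norm_num

/-- excess function `max (|t| - 1) 0`. -/
noncomputable def mfun (t : ℝ) : ℝ := max (|t| - 1) 0

lemma mfun_nonneg (t : ℝ) : 0 ≤ mfun t := le_max_right _ _

lemma abs_le_one_add_mfun (t : ℝ) : |t| ≤ 1 + mfun t := by
  unfold mfun
  rcases le_total (|t| - 1) 0 with h | h
  · rw [max_eq_right h]; linarith
  · rw [max_eq_left h]; linarith

lemma mfun_add_le (a δ : ℝ) : mfun (a + δ) ≤ mfun a + |δ| := by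
  unfold mfun
  apply max_le
  · have h1 : |a + δ| ≤ |a| + |δ| := abs_add_le a δ
    have h2 : |a| - 1 ≤ max (|a| - 1) 0 := le_max_left _ _
    linarith
  · have := le_max_right (|a| - 1) (0:ℝ)
    have := abs_nonneg δ
    linarith

lemma mfun_eq_zero_of_abs_le (t : ℝ) (h : |t| ≤ 1) : mfun t = 0 := by
  unfold mfun; rw [max_eq_right]; linarith

lemma mfun_eq_of_one_le (t : ℝ) (h : 1 ≤ |t|) : mfun t = |t| - 1 := by
  unfold mfun; rw [max_eq_left]; linarith

/-- The halfspace description of the Minkowski sum. -/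
def SHset (n : ℕ) : Set (Fin n → ℝ) := {x | ∑ i, mfun (x i) ≤ 1}

lemma max_sub_max_neg (a : ℝ) : max a 0 - max (-a) 0 = a := by
  rcases le_total a 0 with h | h
  · rw [max_eq_right h, max_eq_left (by linarith : (0:ℝ) ≤ -a)]; ring
  · rw [max_eq_left h, max_eq_right (by linarith : -a ≤ (0:ℝ))]; ring

lemma max_add_max_neg (a : ℝ) : max a 0 + max (-a) 0 = |a| := by
  rcases le_total a 0 with h | h
  · rw [max_eq_right h, max_eq_left (by linarith : (0:ℝ) ≤ -a), abs_of_nonpos h]; ring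
  · rw [max_eq_left h, max_eq_right (by linarith : -a ≤ (0:ℝ)), abs_of_nonneg h]; ring

lemma sum_abs_stdVec (n : ℕ) (i : Fin n) : ∑ j, |stdVec n i j| = 1 := by
  unfold stdVec
  have : ∀ j, |Pi.single (M := fun _ : Fin n => ℝ) i 1 j| = if j = i then 1 else 0 := by
    intro j; rw [Pi.single_apply]; split_ifs <;> simp
  rw [Finset.sum_congr rfl (fun j _ => this j)]
  simp

lemma cross_subset_l1 (n : ℕ) : crossPoly n ⊆ {d : Fin n → ℝ | ∑ i, |d i| ≤ 1} := by
  apply convexHull_min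
  · rintro x ⟨i, rfl | rfl⟩
    · simp only [Set.mem_setOf_eq]; rw [sum_abs_stdVec]
    · simp only [Set.mem_setOf_eq, Pi.neg_apply, abs_neg]; rw [sum_abs_stdVec]
  · intro u hu v hv a b ha hb hab
    simp only [Set.mem_setOf_eq] at *
    have key : ∀ i : Fin n, |(a • u + b • v) i| ≤ a * |u i| + b * |v i| := by
      intro i
      simp only [Pi.add_apply, Pi.smul_apply, smul_eq_mul]
      calc |a * u i + b * v i| ≤ |a * u i| + |b * v i| := abs_add_le _ _
        _ = a * |u i| + b * |v i| := by
            rw [abs_mul, abs_mul, abs_of_nonneg ha, abs_of_nonneg hb]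
    calc ∑ i, |(a • u + b • v) i| ≤ ∑ i, (a * |u i| + b * |v i|) :=
          Finset.sum_le_sum fun i _ => key i
      _ = a * ∑ i, |u i| + b * ∑ i, |v i| := by
          rw [Finset.sum_add_distrib, ← Finset.mul_sum, ← Finset.mul_sum]
      _ ≤ a * 1 + b * 1 := by
          apply add_le_add (mul_le_mul_of_nonneg_left hu ha) (mul_le_mul_of_nonneg_left hv hb)
      _ = 1 := by linarith

lemma l1_subset_cross (n : ℕ) (d : Fin (n+1) → ℝ) (hd : ∑ i, |d i| ≤ 1) :
    d ∈ crossPoly (n+1) := by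
  classical
  set V : Set (Fin (n+1) → ℝ) := {x | ∃ i, x = stdVec (n+1) i ∨ x = -stdVec (n+1) i} with hV
  set s : ℝ := 1 - ∑ i, |d i| with hs
  have hs0 : 0 ≤ s := by simp only [hs]; linarith
  set w : Fin (n+1) × Bool → ℝ := fun p =>
    (if p.2 then max (d p.1) 0 else max (-(d p.1)) 0) + (if p.1 = 0 then s/2 else 0) with hw
  set z : Fin (n+1) × Bool → (Fin (n+1) → ℝ) := fun p =>
    if p.2 then stdVec (n+1) p.1 else -stdVec (n+1) p.1 with hz
  have wt : ∀ i, w (i, true) = max (d i) 0 + (if i = 0 then s/2 else 0) := fun i => by simp [hw]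
  have wf : ∀ i, w (i, false) = max (-(d i)) 0 + (if i = 0 then s/2 else 0) := fun i => by
    simp [hw]
  have zt : ∀ i, z (i, true) = stdVec (n+1) i := fun i => by simp [hz]
  have zf : ∀ i, z (i, false) = -stdVec (n+1) i := fun i => by simp [hz]
  have hwpos : ∀ p ∈ Finset.univ, 0 ≤ w p := by
    intro p _
    apply add_nonneg
    · split_ifs <;> exact le_max_right _ _
    · split_ifs <;> positivity
  have hwsum : ∑ p, w p = 1 := by
    rw [Fintype.sum_prod_type]
    have key : ∀ i : Fin (n+1), ∑ b, w (i, b) = |d i| + (if i = 0 then s else 0) := by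
      intro i
      rw [Fintype.sum_bool, wt, wf]
      have := max_add_max_neg (d i)
      by_cases h0 : i = 0
      · simp only [if_pos h0]; linarith
      · simp only [if_neg h0]; linarith
    rw [Finset.sum_congr rfl (fun i _ => key i), Finset.sum_add_distrib]
    rw [Finset.sum_ite_eq' Finset.univ (0 : Fin (n+1)) (fun _ => s)]
    simp [hs]
  have hzmem : ∀ p ∈ Finset.univ, z p ∈ convexHull ℝ V := by
    rintro ⟨i, b⟩ _
    apply subset_convexHull
    cases b
    · exact ⟨i, Or.inr (zf i)⟩
    · exact ⟨i, Or.inl (zt i)⟩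
  have hcomb : ∑ p, w p • z p = d := by
    funext j
    rw [Finset.sum_apply]
    rw [Fintype.sum_prod_type]
    have step : ∀ i : Fin (n+1), ∑ b, (w (i, b) • z (i, b)) j
        = if j = i then d i else 0 := by
      intro i
      rw [Fintype.sum_bool, wt, wf, zt, zf]
      simp only [Pi.smul_apply, Pi.neg_apply, smul_eq_mul]
      unfold stdVec
      rw [Pi.single_apply]
      have := max_sub_max_neg (d i)
      rcases eq_or_ne j i with h | h
      · simp only [h, if_pos rfl]
        by_cases h0 : i = 0
        · simp only [if_pos h0, if_true]; ring_nf; linarith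
        · simp only [if_neg h0, if_true]; ring_nf; linarith
      · simp [h]
    rw [Finset.sum_congr rfl (fun i _ => step i)]
    simp
  rw [crossPoly, ← hV, ← hcomb]
  exact (convex_convexHull ℝ V).sum_mem hwpos hwsum hzmem

lemma clamp_abs_le (t : ℝ) : |max (-1) (min 1 t)| ≤ 1 := by
  rw [abs_le]
  constructor
  · exact le_max_left _ _
  · apply max_le (by norm_num)
    exact min_le_left _ _

lemma clamp_diff_abs (t : ℝ) : |t - max (-1) (min 1 t)| = mfun t := by
  unfold mfun
  rcases le_total t (-1) with h | h
  · rw [min_eq_right (by linarith : t ≤ 1), max_eq_left h]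
    rw [abs_of_nonpos (by linarith : t - -1 ≤ 0), abs_of_nonpos (by linarith : t ≤ 0),
      max_eq_left (by linarith)]
    ring
  · rcases le_total 1 t with h2 | h2
    · rw [min_eq_left h2, max_eq_right (by norm_num : (-1:ℝ) ≤ 1)]
      rw [abs_of_nonneg (by linarith : (0:ℝ) ≤ t - 1), abs_of_nonneg (by linarith : (0:ℝ) ≤ t),
        max_eq_left (by linarith)]
    · rw [min_eq_right h2, max_eq_right h, sub_self, abs_zero]
      rw [max_eq_right]
      have : |t| ≤ 1 := abs_le.2 ⟨h, h2⟩
      linarith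

lemma sum_eq_SH (n : ℕ) : regCube (n+1) + crossPoly (n+1) = SHset (n+1) := by
  ext x
  constructor
  · intro hx
    rw [Set.mem_add] at hx
    obtain ⟨c, hc, d, hd, rfl⟩ := hx
    have hd1 : ∑ i, |d i| ≤ 1 := cross_subset_l1 (n+1) hd
    show ∑ i, mfun ((c + d) i) ≤ 1
    calc ∑ i, mfun ((c + d) i) ≤ ∑ i, |d i| := by
          apply Finset.sum_le_sum
          intro i _
          apply max_le
          · have h1 : |c i + d i| ≤ |c i| + |d i| := abs_add_le _ _
            have h2 : |c i| ≤ 1 := hc i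
            simp only [Pi.add_apply]
            linarith
          · exact abs_nonneg _
      _ ≤ 1 := hd1
  · intro hx
    rw [Set.mem_add]
    refine ⟨fun i => max (-1) (min 1 (x i)), fun i => clamp_abs_le (x i),
      fun i => x i - max (-1) (min 1 (x i)), ?_, ?_⟩
    · apply l1_subset_cross
      calc ∑ i, |x i - max (-1) (min 1 (x i))| = ∑ i, mfun (x i) :=
            Finset.sum_congr rfl (fun i _ => clamp_diff_abs (x i))
        _ ≤ 1 := hx
    · funext i; simp

lemma abs_add_sgn (t ε : ℝ) (hε : 0 ≤ ε) : |t + ε * sgn t| = |t| + ε := by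
  unfold sgn; split_ifs with h
  · rw [mul_one, abs_of_nonneg (by linarith), abs_of_nonneg h]
  · push_neg at h
    rw [abs_of_neg h, abs_of_neg (by nlinarith : t + ε * (-1) < 0)]; ring

lemma abs_sub_sgn (t ε : ℝ) (hε : 0 ≤ ε) (h : ε ≤ |t|) : |t - ε * sgn t| = |t| - ε := by
  unfold sgn; split_ifs with h0
  · rw [abs_of_nonneg h0] at h
    rw [mul_one, abs_of_nonneg (by linarith), abs_of_nonneg h0]
  · push_neg at h0
    rw [abs_of_neg h0] at h
    rw [abs_of_neg h0, abs_of_nonpos (by linarith : t - ε * (-1) ≤ 0)]; ring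

lemma sum_one_fin (n : ℕ) : ∑ _i : Fin (n+1), (1:ℝ) = (n:ℝ) + 1 := by simp

theorem extremePoints_cube_add_crossPoly (n : ℕ) :
    Set.extremePoints ℝ (regCube (n + 1) + crossPoly (n + 1)) =
      {x : Fin (n + 1) → ℝ | ∃ j, |x j| = 2 ∧ ∀ i, i ≠ j → |x i| = 1} := by
  classical
  rw [sum_eq_SH n]
  ext x
  simp only [Set.mem_setOf_eq, mem_extremePoints]
  constructor
  · -- extreme point ⇒ orbit form
    rintro ⟨hxS, hext⟩
    by_contra hno
    push_neg at hno
    have hxS' : ∑ i, mfun (x i) ≤ 1 := hxS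
    have mid : ∀ y z : Fin (n+1) → ℝ, y ∈ SHset (n+1) → z ∈ SHset (n+1) →
        (∀ i, y i + z i = 2 * x i) → y ≠ x → False := by
      intro y z hy hz hmid hne
      have hseg : x ∈ openSegment ℝ y z := by
        refine ⟨1/2, 1/2, by norm_num, by norm_num, by norm_num, ?_⟩
        funext i
        simp only [Pi.add_apply, Pi.smul_apply, smul_eq_mul]
        have := hmid i; linarith
      exact hne (hext y hy z hz hseg).1
    by_cases hk : ∃ k, |x k| < 1
    · -- some coordinate strictly inside [-1,1]
      obtain ⟨k, hk⟩ := hk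
      set ε : ℝ := 1 - |x k| with hε
      have hε0 : 0 < ε := by simp only [hε]; linarith
      have upd_mem : ∀ δ : ℝ, |δ| ≤ ε → Function.update x k (x k + δ) ∈ SHset (n+1) := by
        intro δ hδ
        show ∑ i, mfun (Function.update x k (x k + δ) i) ≤ 1
        have hpt : ∀ i, mfun (Function.update x k (x k + δ) i) = mfun (x i) := by
          intro i
          rw [Function.update_apply]
          by_cases h : i = k
          · rw [if_pos h, h]
            rw [mfun_eq_zero_of_abs_le _ (by
              calc |x k + δ| ≤ |x k| + |δ| := abs_add_le _ _
                _ ≤ 1 := by simp only [hε] at hδ; linarith),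
              mfun_eq_zero_of_abs_le _ hk.le]
          · rw [if_neg h]
        rw [Finset.sum_congr rfl (fun i _ => hpt i)]
        exact hxS'
      refine mid (Function.update x k (x k + ε)) (Function.update x k (x k + (-ε)))
        (upd_mem ε (abs_of_pos hε0).le)
        (upd_mem (-ε) (by rw [abs_neg, abs_of_pos hε0]))
        ?_ ?_
      · intro i
        rw [Function.update_apply, Function.update_apply]
        split_ifs with h
        · subst h; ring
        · ring
      · intro hcontra
        have h0 := congrFun hcontra k
        rw [Function.update_self] at h0
        linarith
    · push_neg at hk
      by_cases hT : ∑ i, mfun (x i) < 1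
      · -- slack in the simplex inequality : perturb coordinate 0
        set ε : ℝ := 1 - ∑ i, mfun (x i) with hε
        have hε0 : 0 < ε := by simp only [hε]; linarith
        have upd_mem : ∀ δ : ℝ, |δ| ≤ ε → Function.update x 0 (x 0 + δ) ∈ SHset (n+1) := by
          intro δ hδ
          show ∑ i, mfun (Function.update x 0 (x 0 + δ) i) ≤ 1
          have hpt : ∀ i ∈ Finset.univ, mfun (Function.update x 0 (x 0 + δ) i)
              ≤ mfun (x i) + (if i = 0 then ε else 0) := by
            intro i _
            rw [Function.update_apply]
            by_cases h : i = 0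
            · rw [if_pos h, if_pos h, h]
              calc mfun (x 0 + δ) ≤ mfun (x 0) + |δ| := mfun_add_le _ _
                _ ≤ mfun (x 0) + ε := by linarith
            · rw [if_neg h, if_neg h, add_zero]
          calc ∑ i, mfun (Function.update x 0 (x 0 + δ) i)
              ≤ ∑ i, (mfun (x i) + (if i = 0 then ε else 0)) := Finset.sum_le_sum hpt
            _ = (∑ i, mfun (x i)) + ε := by
                rw [Finset.sum_add_distrib,
                  Finset.sum_ite_eq' Finset.univ (0 : Fin (n+1)) (fun _ => ε)]
                simp
            _ ≤ 1 := by simp only [hε]; linarith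
        refine mid (Function.update x 0 (x 0 + ε)) (Function.update x 0 (x 0 + (-ε)))
          (upd_mem ε (abs_of_pos hε0).le)
          (upd_mem (-ε) (by rw [abs_neg, abs_of_pos hε0]))
          ?_ ?_
        · intro i
          rw [Function.update_apply, Function.update_apply]
          split_ifs with h
          · subst h; ring
          · ring
        · intro hcontra
          have h0 := congrFun hcontra 0
          rw [Function.update_self] at h0
          linarith
      · -- tight : two coordinates exceed 1 in absolute value
        have hT1 : ∑ i, mfun (x i) = 1 := le_antisymm hxS' (by linarith)
        have hex : ∃ k, 0 < mfun (x k) := by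
          by_contra hc; push_neg at hc
          have hz : ∀ i, mfun (x i) = 0 := fun i => le_antisymm (hc i) (mfun_nonneg _)
          rw [Finset.sum_congr rfl (fun i _ => hz i)] at hT1
          simp at hT1
        obtain ⟨k, hk0⟩ := hex
        have hk1 : 1 < |x k| := by
          by_contra hc; push_neg at hc
          rw [mfun_eq_zero_of_abs_le _ hc] at hk0
          exact lt_irrefl _ hk0
        have hl : ∃ l, l ≠ k ∧ 1 < |x l| := by
          by_contra hc; push_neg at hc
          have hmz : ∀ l, l ≠ k → mfun (x l) = 0 :=
            fun l hl => mfun_eq_zero_of_abs_le _ (hc l hl)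
          have hsum : ∑ i, mfun (x i) = mfun (x k) :=
            Finset.sum_eq_single_of_mem k (Finset.mem_univ k) (fun l _ hl => hmz l hl)
          rw [hsum, mfun_eq_of_one_le _ hk1.le] at hT1
          have h2 : |x k| = 2 := by linarith
          obtain ⟨i, hij, hi⟩ := hno k h2
          exact hi (le_antisymm (hc i hij) (hk i))
        obtain ⟨l, hlk, hl1⟩ := hl
        set ε : ℝ := min (|x k| - 1) (|x l| - 1) with hε
        have hε0 : 0 < ε := lt_min (by linarith) (by linarith)
        have hεk : ε ≤ |x k| - 1 := min_le_left _ _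
        have hεl : ε ≤ |x l| - 1 := min_le_right _ _
        have mem_gen : ∀ (k' l' : Fin (n+1)) (w : Fin (n+1) → ℝ), k' ≠ l' →
            1 < |x k'| → 1 < |x l'| → ε ≤ |x l'| - 1 →
            w k' = x k' + ε * sgn (x k') → w l' = x l' - ε * sgn (x l') →
            (∀ i, i ≠ k' → i ≠ l' → w i = x i) →
            w ∈ SHset (n+1) := by
          intro k' l' w hkl hk' hl' hεl' hwk hwl hwo
          show ∑ i, mfun (w i) ≤ 1
          have hptk : mfun (w k') = mfun (x k') + ε := by
            have h1 : mfun (x k' + ε * sgn (x k')) = |x k'| + ε - 1 := by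
              unfold mfun
              rw [abs_add_sgn _ _ hε0.le, max_eq_left (by linarith)]
            have h2 : mfun (x k') = |x k'| - 1 := mfun_eq_of_one_le _ hk'.le
            rw [hwk, h1, h2]; ring
          have hptl : mfun (w l') = mfun (x l') - ε := by
            have h1 : mfun (x l' - ε * sgn (x l')) = |x l'| - ε - 1 := by
              unfold mfun
              rw [abs_sub_sgn _ _ hε0.le (by linarith), max_eq_left (by linarith)]
            have h2 : mfun (x l') = |x l'| - 1 := mfun_eq_of_one_le _ hl'.le
            rw [hwl, h1, h2]; ring
          have hsum : ∑ i, mfun (w i)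
              = ∑ i, (mfun (x i) + (if i = k' then ε else 0) + (if i = l' then -ε else 0)) := by
            apply Finset.sum_congr rfl
            intro i _
            by_cases h1 : i = k'
            · subst h1; rw [if_pos rfl, if_neg (by exact fun h => hkl h), hptk]; ring
            · by_cases h2 : i = l'
              · subst h2; rw [if_neg h1, if_pos rfl, hptl]; ring
              · rw [if_neg h1, if_neg h2, hwo i h1 h2]; ring
          rw [hsum, Finset.sum_add_distrib, Finset.sum_add_distrib,
            Finset.sum_ite_eq' Finset.univ k' (fun _ => ε),
            Finset.sum_ite_eq' Finset.univ l' (fun _ => -ε)]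
          simp only [Finset.mem_univ, if_true]
          linarith
        refine mid
          (fun i => if i = k then x i + ε * sgn (x i) else if i = l then x i - ε * sgn (x i) else x i)
          (fun i => if i = l then x i + ε * sgn (x i) else if i = k then x i - ε * sgn (x i) else x i)
          (mem_gen k l _ (fun h => hlk h.symm) hk1 hl1 hεl
            (by rw [if_pos rfl]) (by rw [if_neg hlk, if_pos rfl]) ?_)
          (mem_gen l k _ hlk hl1 hk1 hεk
            (by rw [if_pos rfl]) (by rw [if_neg (fun h => hlk h.symm), if_pos rfl]) ?_)
          ?_ ?_
        · intro i h1 h2; rw [if_neg h1, if_neg h2]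
        · intro i h1 h2; rw [if_neg h1, if_neg h2]
        · intro i
          by_cases h1 : i = k
          · subst h1
            rw [if_pos rfl, if_neg (fun h => hlk h.symm), if_pos rfl]; ring
          · by_cases h2 : i = l
            · subst h2
              rw [if_neg h1, if_pos rfl, if_pos rfl]; ring
            · rw [if_neg h1, if_neg h2, if_neg h2, if_neg h1]; ring
        · intro hcontra
          have h0 := congrFun hcontra k
          rw [if_pos rfl] at h0
          have h1 : ε * sgn (x k) = 0 := by linarith
          have h2 : |ε * sgn (x k)| = 0 := by rw [h1, abs_zero]
          rw [abs_mul, abs_sgn, mul_one, abs_of_pos hε0] at h2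
          linarith
  · -- orbit form ⇒ extreme point
    rintro ⟨j, hj2, hj1⟩
    have habs : ∀ i, |x i| = if i = j then 2 else 1 := by
      intro i; by_cases h : i = j
      · rw [if_pos h, h]; exact hj2
      · rw [if_neg h]; exact hj1 i h
    constructor
    · show ∑ i, mfun (x i) ≤ 1
      have hpt : ∀ i, mfun (x i) = if i = j then 1 else 0 := by
        intro i
        by_cases h : i = j
        · rw [if_pos h, h, mfun_eq_of_one_le _ (by rw [hj2]; norm_num), hj2]; norm_num
        · rw [if_neg h, mfun_eq_zero_of_abs_le _ (hj1 i h).le]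
      rw [Finset.sum_congr rfl (fun i _ => hpt i),
        Finset.sum_ite_eq' Finset.univ j (fun _ => (1:ℝ))]
      simp
    · intro y hy z hz hseg
      obtain ⟨a, b, ha, hb, hab, hxy⟩ := hseg
      have hx_eq : ∀ i, x i = a * y i + b * z i := by
        intro i
        have := congrFun hxy i
        simpa using this.symm
      have hFle : ∀ w : Fin (n+1) → ℝ, w ∈ SHset (n+1) →
          (∀ i ∈ Finset.univ, sgn (x i) * w i ≤ 1 + mfun (w i)) ∧
          ∑ i, sgn (x i) * w i ≤ (n:ℝ) + 2 := by
        intro w hw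
        have hw' : ∑ i, mfun (w i) ≤ 1 := hw
        have h1 : ∀ i ∈ Finset.univ, sgn (x i) * w i ≤ 1 + mfun (w i) := by
          intro i _
          calc sgn (x i) * w i ≤ |sgn (x i) * w i| := le_abs_self _
            _ = |w i| := by rw [abs_mul, abs_sgn, one_mul]
            _ ≤ 1 + mfun (w i) := abs_le_one_add_mfun _
        refine ⟨h1, ?_⟩
        calc ∑ i, sgn (x i) * w i ≤ ∑ i, (1 + mfun (w i)) := Finset.sum_le_sum h1
          _ = ((n:ℝ) + 1) + ∑ i, mfun (w i) := by
              rw [Finset.sum_add_distrib, sum_one_fin n]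
          _ ≤ (n:ℝ) + 2 := by linarith
      have hFx : ∑ i, sgn (x i) * x i = (n:ℝ) + 2 := by
        have hpt : ∀ i, sgn (x i) * x i = 1 + (if i = j then (1:ℝ) else 0) := by
          intro i
          rw [sgn_mul, habs i]
          by_cases h : i = j <;> simp [h] <;> norm_num
        rw [Finset.sum_congr rfl (fun i _ => hpt i), Finset.sum_add_distrib, sum_one_fin n,
          Finset.sum_ite_eq' Finset.univ j (fun _ => (1:ℝ))]
        simp; ring
      have hlin : a * (∑ i, sgn (x i) * y i) + b * (∑ i, sgn (x i) * z i) = (n:ℝ) + 2 := by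
        rw [← hFx, Finset.mul_sum, Finset.mul_sum, ← Finset.sum_add_distrib]
        apply Finset.sum_congr rfl
        intro i _
        rw [hx_eq i]; ring
      have h4 : a * ((n:ℝ)+2) + b * ((n:ℝ)+2) = (n:ℝ)+2 := by rw [← add_mul, hab, one_mul]
      have hFy : ∑ i, sgn (x i) * y i = (n:ℝ) + 2 := by
        apply mul_left_cancel₀ (ne_of_gt ha)
        have h5 := mul_le_mul_of_nonneg_left (hFle z hz).2 hb.le
        have h6 := mul_le_mul_of_nonneg_left (hFle y hy).2 ha.le
        linarith
      have hFz : ∑ i, sgn (x i) * z i = (n:ℝ) + 2 := by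
        apply mul_left_cancel₀ (ne_of_gt hb)
        have h5 := mul_le_mul_of_nonneg_left (hFle z hz).2 hb.le
        have h6 := mul_le_mul_of_nonneg_left (hFle y hy).2 ha.le
        linarith
      have hstep : ∀ w : Fin (n+1) → ℝ, w ∈ SHset (n+1) →
          (∑ i, sgn (x i) * w i = (n:ℝ) + 2) →
          (∀ i, sgn (x i) * w i = 1 + mfun (w i)) ∧ (∑ i, mfun (w i) = 1) := by
        intro w hw hF
        have hw' : ∑ i, mfun (w i) ≤ 1 := hw
        have h1 := (hFle w hw).1
        have h2 : ∑ i, (1 + mfun (w i)) = ((n:ℝ)+1) + ∑ i, mfun (w i) := by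
          rw [Finset.sum_add_distrib, sum_one_fin n]
        have hm1 : ∑ i, mfun (w i) = 1 := by
          have hle := Finset.sum_le_sum h1
          rw [hF, h2] at hle
          linarith
        have heq : ∑ i, sgn (x i) * w i = ∑ i, (1 + mfun (w i)) := by
          rw [hF, h2, hm1]; ring
        exact ⟨fun i => (Finset.sum_eq_sum_iff_of_le h1).1 heq i (Finset.mem_univ i), hm1⟩
      obtain ⟨hy5, hp1⟩ := hstep y hy hFy
      obtain ⟨hz5, hq1⟩ := hstep z hz hFz
      have e2 : (2:ℝ) = a * (1 + mfun (y j)) + b * (1 + mfun (z j)) := by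
        have h1 : sgn (x j) * x j = 2 := by rw [sgn_mul]; exact hj2
        have h2 : sgn (x j) * x j = a * (sgn (x j) * y j) + b * (sgn (x j) * z j) := by
          rw [hx_eq j]; ring
        rw [h1, hy5 j, hz5 j] at h2
        exact h2
      have hpj : mfun (y j) ≤ 1 := by
        rw [← hp1]
        exact Finset.single_le_sum (fun i _ => mfun_nonneg (y i)) (Finset.mem_univ j)
      have hqj : mfun (z j) ≤ 1 := by
        rw [← hq1]
        exact Finset.single_le_sum (fun i _ => mfun_nonneg (z i)) (Finset.mem_univ j)
      have hpj1 : mfun (y j) = 1 := by nlinarith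
      have hqj1 : mfun (z j) = 1 := by nlinarith
      have final : ∀ w : Fin (n+1) → ℝ, (∀ i, sgn (x i) * w i = 1 + mfun (w i)) →
          (∑ i, mfun (w i) = 1) → mfun (w j) = 1 → w = x := by
        intro w h5 hm1 hmj
        have hzero : ∀ i, i ≠ j → mfun (w i) = 0 := by
          intro i hij
          have herase := Finset.add_sum_erase Finset.univ (fun i => mfun (w i))
            (Finset.mem_univ j)
          have hsz : ∑ i ∈ Finset.univ.erase j, mfun (w i) = 0 := by
            rw [hmj] at herase; linarith
          exact (Finset.sum_eq_zero_iff_of_nonneg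
            (fun i _ => mfun_nonneg (w i))).1 hsz i (Finset.mem_erase.2 ⟨hij, Finset.mem_univ i⟩)
        funext i
        have h2 : w i = sgn (x i) * (1 + mfun (w i)) := by
          calc w i = (sgn (x i) * sgn (x i)) * w i := by rw [sgn_sq]; ring
            _ = sgn (x i) * (sgn (x i) * w i) := by ring
            _ = sgn (x i) * (1 + mfun (w i)) := by rw [h5 i]
        have h3 : x i = sgn (x i) * |x i| := by
          calc x i = (sgn (x i) * sgn (x i)) * x i := by rw [sgn_sq]; ring
            _ = sgn (x i) * (sgn (x i) * x i) := by ring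
            _ = sgn (x i) * |x i| := by rw [sgn_mul]
        by_cases h : i = j
        · subst h
          rw [hj2] at h3
          rw [h2, hmj]
          linarith
        · rw [hj1 i h] at h3
          rw [h2, hzero i h]
          linarith
      exact ⟨final y hy5 hp1 hpj1, final z hz5 hq1 hqj1⟩
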